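/- arXiv:1806.06251 — 3 statements merged into one kernel-verified Lean document; each statement's English description precedes it below -/
import Mathlib

section
/- Let G be a finite group, let 𝒟 be a collection of G, and let S be a basic collection of G. Then for every F ∈ 𝒟 there exists exactly one H ∈ S such that F ∈ S_𝒟(H). In other words, the sets S_𝒟(H) for H ∈ S form a partition of 𝒟 (some of the parts possibly empty). -/
/-- Let `G` be a finite group, `𝒟` a collection of `G` and `S` a basic collection
of `G`. Then for every `F ∈ 𝒟` there is exactly one `H ∈ S` with `F ∈ S_𝒟(H)`, where
`S_𝒟(H) = {F ∈ 𝒟 : H ≤ F, and every H' ∈ S with H ≤ H' ≤ F equals H}`. -/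
theorem stmt_4 {G : Type*} [Group G] [Finite G]
    (𝒟 S : Set (Subgroup G))
    (h_top : ⊤ ∈ 𝒟)
    (h_inf : ∀ H ∈ 𝒟, ∀ K ∈ 𝒟, H ⊓ K ∈ 𝒟)
    (h_conj : ∀ H ∈ 𝒟, ∀ g : G, H.map (MulAut.conj g).toMonoidHom ∈ 𝒟)
    (hS_bot : ⊥ ∈ S)
    (hS_norm : ∀ H ∈ S, H.Normal)
    (hS_sup : ∀ H ∈ S, ∀ K ∈ S, H ⊔ K ∈ S) :
    ∀ F ∈ 𝒟, ∃! H : Subgroup G,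
      H ∈ S ∧ H ≤ F ∧ ∀ H' ∈ S, H ≤ H' → H' ≤ F → H' = H := by
  classical
  intro F hF
  -- the family of members of `S` contained in `F`
  have hfin : ({K | K ∈ S ∧ K ≤ F} : Set (Subgroup G)).Finite := Set.toFinite _
  set t : Finset (Subgroup G) := hfin.toFinset with ht
  have key : ∀ u : Finset (Subgroup G), (∀ K ∈ u, K ∈ S ∧ K ≤ F) →
      u.sup id ∈ S ∧ u.sup id ≤ F := by
    intro u
    induction u using Finset.induction_on with
    | empty => intro _; simpa using hS_bot
    | @insert a u ha ih =>
      intro hu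
      have hau := hu a (Finset.mem_insert_self a u)
      have hrest : ∀ K ∈ u, K ∈ S ∧ K ≤ F := fun K hK =>
        hu K (Finset.mem_insert_of_mem hK)
      obtain ⟨hS', hle'⟩ := ih hrest
      rw [Finset.sup_insert]
      exact ⟨hS_sup a hau.1 _ hS', sup_le hau.2 hle'⟩
  have hmem : ∀ K ∈ t, K ∈ S ∧ K ≤ F := by
    intro K hK
    rw [ht, Set.Finite.mem_toFinset] at hK
    exact hK
  obtain ⟨hHS, hHF⟩ := key t hmem
  set H := t.sup id with hH
  have hmax : ∀ K ∈ S, K ≤ F → K ≤ H := by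
    intro K hKS hKF
    have : K ∈ t := by rw [ht, Set.Finite.mem_toFinset]; exact ⟨hKS, hKF⟩
    exact Finset.le_sup (f := id) this
  refine ⟨H, ⟨hHS, hHF, fun H' hH'S hle hH'F => le_antisymm (hmax H' hH'S hH'F) hle⟩, ?_⟩
  intro H₁ ⟨hH₁S, hH₁F, hH₁max⟩
  exact (hH₁max H hHS (hmax H₁ hH₁S hH₁F) hHF).symm
end

section
/- Let G be a finite group, let 𝒟 be a collection of G, and let S be a basic collection of G. Let H₁, H₂ ∈ S, let F₁ ∈ S_𝒟(H₁) and F₂ ∈ S_𝒟(H₂), and let g ∈ G. Then H₁ ∩ H₂ ≤ gF₁g⁻¹ ∩ F₂, and every H' ∈ S with H' ≤ gF₁g⁻¹ ∩ F₂ satisfies H' ≤ H₁ ∩ H₂. -/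

lemma conj_map_of_normal {G : Type*} [Group G] (N : Subgroup G) (hN : N.Normal) (g : G) :
    N.map (MulAut.conj g).toMonoidHom = N := by
  ext x
  simp only [Subgroup.mem_map, MulEquiv.coe_toMonoidHom, MulAut.conj_apply]
  constructor
  · rintro ⟨y, hy, rfl⟩; exact hN.conj_mem y hy g
  · intro hx; exact ⟨g⁻¹ * x * g, by simpa using hN.conj_mem x hx g⁻¹, by group⟩

/-- With `𝒟` a collection and `S` a basic collection of a finite group `G`,
if `H₁, H₂ ∈ S`, `F₁ ∈ S_𝒟(H₁)`, `F₂ ∈ S_𝒟(H₂)` and `g ∈ G`, then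
`H₁ ∩ H₂ ≤ gF₁g⁻¹ ∩ F₂` and every `H' ∈ S` with `H' ≤ gF₁g⁻¹ ∩ F₂` satisfies
`H' ≤ H₁ ∩ H₂`. -/
theorem stmt_5 {G : Type*} [Group G] [Finite G]
    (𝒟 S : Set (Subgroup G))
    (h_top : ⊤ ∈ 𝒟)
    (h_inf : ∀ H ∈ 𝒟, ∀ K ∈ 𝒟, H ⊓ K ∈ 𝒟)
    (h_conj : ∀ H ∈ 𝒟, ∀ g : G, H.map (MulAut.conj g).toMonoidHom ∈ 𝒟)
    (hS_bot : ⊥ ∈ S)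
    (hS_norm : ∀ H ∈ S, H.Normal)
    (hS_sup : ∀ H ∈ S, ∀ K ∈ S, H ⊔ K ∈ S)
    (H₁ H₂ : Subgroup G) (hH₁ : H₁ ∈ S) (hH₂ : H₂ ∈ S)
    (F₁ F₂ : Subgroup G)
    (hF₁ : F₁ ∈ 𝒟 ∧ H₁ ≤ F₁ ∧ ∀ H' ∈ S, H₁ ≤ H' → H' ≤ F₁ → H' = H₁)
    (hF₂ : F₂ ∈ 𝒟 ∧ H₂ ≤ F₂ ∧ ∀ H' ∈ S, H₂ ≤ H' → H' ≤ F₂ → H' = H₂)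
    (g : G) :
    H₁ ⊓ H₂ ≤ F₁.map (MulAut.conj g).toMonoidHom ⊓ F₂ ∧
      ∀ H' ∈ S, H' ≤ F₁.map (MulAut.conj g).toMonoidHom ⊓ F₂ → H' ≤ H₁ ⊓ H₂ := by

  obtain ⟨hF₁D, hH₁F₁, hmax₁⟩ := hF₁
  obtain ⟨hF₂D, hH₂F₂, hmax₂⟩ := hF₂
  constructor
  · refine le_inf ?_ (inf_le_right.trans hH₂F₂)
    have : H₁ = H₁.map (MulAut.conj g).toMonoidHom := (conj_map_of_normal H₁ (hS_norm H₁ hH₁) g).symm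
    calc H₁ ⊓ H₂ ≤ H₁ := inf_le_left
      _ = H₁.map (MulAut.conj g).toMonoidHom := this
      _ ≤ F₁.map (MulAut.conj g).toMonoidHom := Subgroup.map_mono hH₁F₁
  · intro H' hH'S hle
    have hH'norm := hS_norm H' hH'S
    have h1 : H' ≤ F₁ := by
      have h := le_inf_iff.mp hle |>.1
      have : H'.map (MulAut.conj g⁻¹).toMonoidHom ≤ (F₁.map (MulAut.conj g).toMonoidHom).map (MulAut.conj g⁻¹).toMonoidHom :=
        Subgroup.map_mono h
      rw [conj_map_of_normal H' hH'norm] at this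
      refine this.trans ?_
      intro x hx
      simp only [Subgroup.mem_map, MulEquiv.coe_toMonoidHom, MulAut.conj_apply] at hx
      obtain ⟨y, ⟨z, hz, rfl⟩, rfl⟩ := hx
      simpa [mul_assoc] using hz
    have h2 : H' ≤ F₂ := (le_inf_iff.mp hle).2
    have e1 : H' ⊔ H₁ = H₁ := hmax₁ _ (hS_sup H' hH'S H₁ hH₁) le_sup_right (sup_le h1 hH₁F₁)
    have e2 : H' ⊔ H₂ = H₂ := hmax₂ _ (hS_sup H' hH'S H₂ hH₂) le_sup_right (sup_le h2 hH₂F₂)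
    exact le_inf (e1 ▸ le_sup_left) (e2 ▸ le_sup_left)
end

section
/- Let H be a finite group of odd order and let E be a finite 2-group. Then the direct product G = H × E is 2-seminilpotent; that is, for every subgroup K of G whose index [G:K] is even, there exists a normal subgroup N of G with K ≤ N and [G:N] = 2, and the number of normal subgroups N of G with K ≤ N and [G:N] = 2 is odd. -/
private lemma my_normal_of_index_two {G : Type*} [Group G] (N : Subgroup G)
    (h : N.index = 2) : N.Normal := by
  constructor
  intro n hn g
  have key : ∀ a b : G, a * b ∈ N ↔ (a ∈ N ↔ b ∈ N) :=
    fun a b => Subgroup.mul_mem_iff_of_index_two h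
  have h1 : g * n * g⁻¹ ∈ N ↔ ((g ∈ N ↔ n ∈ N) ↔ g⁻¹ ∈ N) := by
    rw [key, key]
  have h2 : g⁻¹ ∈ N ↔ g ∈ N := inv_mem_iff
  rw [h1]
  tauto

private lemma my_exists_hom_of_index_two {G : Type*} [Group G] (N : Subgroup G)
    [N.Normal] (h : N.index = 2) :
    ∃ φ : G →* Multiplicative (ZMod 2), φ.ker = N := by
  haveI : Fact (Nat.Prime 2) := ⟨Nat.prime_two⟩
  have hc : Nat.card (G ⧸ N) = 2 := h
  haveI hcy : IsCyclic (G ⧸ N) := isCyclic_of_prime_card hc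
  have e : Multiplicative (ZMod 2) ≃* (G ⧸ N) := by
    have e0 := zmodCyclicMulEquiv hcy; rw [hc] at e0; exact e0
  refine ⟨(e.symm.toMonoidHom).comp (QuotientGroup.mk' N), ?_⟩
  ext x
  simp only [MonoidHom.mem_ker, MonoidHom.comp_apply, MulEquiv.coe_toMonoidHom,
    EmbeddingLike.map_eq_one_iff, QuotientGroup.mk'_apply, QuotientGroup.eq_one_iff]

private lemma zmod2_sq : ∀ a : Multiplicative (ZMod 2), a ^ 2 = 1 := by decide

private lemma zmod2_ne : ∀ a b : Multiplicative (ZMod 2), a ≠ 1 → b ≠ 1 → a = b := by decide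

/-- If `H` is a finite group of odd order and `E` is a finite 2-group, then
`G = H × E` is 2-seminilpotent: for every subgroup `K` of `G` with `[G:K]` even, there is a
normal subgroup `N` of `G` with `K ≤ N` and `[G:N] = 2`, and the number of such normal
subgroups is odd. -/
theorem stmt_10 {H E : Type*} [Group H] [Group E] [Finite H] [Finite E]
    (hH : Odd (Nat.card H)) (hE : ∃ n : ℕ, Nat.card E = 2 ^ n)
    (K : Subgroup (H × E)) (hK : Even K.index) :
    (∃ N : Subgroup (H × E), N.Normal ∧ K ≤ N ∧ N.index = 2) ∧
      Odd (Nat.card {N : Subgroup (H × E) // N.Normal ∧ K ≤ N ∧ N.index = 2}) := by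
  classical
  haveI : Fact (Nat.Prime 2) := ⟨Nat.prime_two⟩
  -- existence
  have hex : ∃ N : Subgroup (H × E), N.Normal ∧ K ≤ N ∧ N.index = 2 := by
    set π : (H × E) →* E := MonoidHom.snd H E with hπ
    have hπs : Function.Surjective π := fun e => ⟨(1, e), rfl⟩
    set P : Subgroup E := K.map π with hP
    have hPne : P ≠ ⊤ := by
      intro htop
      -- restrict π to K
      set f : K →* E := π.comp K.subtype with hf
      have hfrange : f.range = ⊤ := by
        rw [hf, MonoidHom.range_comp, Subgroup.range_subtype, ← hP, htop]
      have hcard1 : Nat.card K = Nat.card (K ⧸ f.ker) * Nat.card f.ker :=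
        Subgroup.card_eq_card_quotient_mul_card_subgroup f.ker
      have hcard2 : Nat.card (K ⧸ f.ker) = Nat.card E := by
        have := Subgroup.index_ker f
        rw [hfrange] at this
        simpa [Subgroup.index] using this.trans (Nat.card_congr Subgroup.topEquiv.toEquiv)
      have hmul : Nat.card K * K.index = Nat.card H * Nat.card E := by
        rw [Subgroup.card_mul_index, Nat.card_prod]
      rw [hcard1, hcard2] at hmul
      have hEpos : 0 < Nat.card E := Nat.card_pos
      have hdvd : K.index ∣ Nat.card H := by
        refine ⟨Nat.card f.ker, ?_⟩
        have : Nat.card E * (K.index * Nat.card f.ker) = Nat.card E * Nat.card H := by ring_nf; ring_nf at hmul; linarith [hmul]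
        exact (Nat.eq_of_mul_eq_mul_left hEpos this).symm
      have : Even (Nat.card H) := (even_iff_two_dvd.mp hK).trans hdvd |> even_iff_two_dvd.mpr
      exact (Nat.not_even_iff_odd.mpr hH) this
    have hEp : IsPGroup 2 E := IsPGroup.iff_card.mpr hE
    obtain ⟨n, hn⟩ := hE
    obtain ⟨m, hm⟩ := (IsPGroup.to_subgroup hEp P).exists_card_eq
    have hmn : m < n := by
      have hdvd : Nat.card P ∣ Nat.card E := Subgroup.card_subgroup_dvd_card P
      have hne : Nat.card P ≠ Nat.card E := fun hEq => hPne (Subgroup.eq_top_of_card_eq P hEq)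
      rw [hm, hn] at hdvd hne
      have hle : m ≤ n := (Nat.pow_dvd_pow_iff_le_right (by norm_num)).mp hdvd
      exact lt_of_le_of_ne hle (fun h => hne (congrArg (fun k => 2 ^ k) h))
    have hdvd' : (2:ℕ) ^ (n - 1) ∣ Nat.card E := by
      rw [hn]; exact pow_dvd_pow 2 (Nat.sub_le n 1)
    have hmle : m ≤ n - 1 := by omega
    obtain ⟨M, hMcard, hPM⟩ :=
      Sylow.exists_subgroup_card_pow_prime_le (n := m) (m := n - 1) 2 hdvd' P hm hmle
    have hMidx : M.index = 2 := by
      have hmi := Subgroup.card_mul_index M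
      rw [hMcard, hn] at hmi
      have hps : (2:ℕ) ^ (n - 1) * 2 = 2 ^ n := by
        rw [← pow_succ]; congr 1; omega
      have hpos : 0 < (2:ℕ) ^ (n - 1) := by positivity
      exact Nat.eq_of_mul_eq_mul_left hpos (by rw [hmi, hps])
    haveI hMnorm : M.Normal := my_normal_of_index_two M hMidx
    refine ⟨M.comap π, hMnorm.comap π, ?_, ?_⟩
    · exact Subgroup.map_le_iff_le_comap.mp hPM
    · rw [Subgroup.index_comap_of_surjective M hπs]; exact hMidx
  refine ⟨hex, ?_⟩
  -- counting
  haveI : Finite ((H × E) →* Multiplicative (ZMod 2)) :=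
    Finite.of_injective _ DFunLike.coe_injective
  set D : Subgroup ((H × E) →* Multiplicative (ZMod 2)) :=
    { carrier := {φ | K ≤ φ.ker}
      one_mem' := fun x _ => by simp [MonoidHom.mem_ker]
      mul_mem' := by
        intro a b ha hb x hx
        have h1 := ha hx; have h2 := hb hx
        simp only [MonoidHom.mem_ker] at *
        simp [h1, h2]
      inv_mem' := by
        intro a ha x hx
        have h1 := ha hx
        simp only [MonoidHom.mem_ker] at *
        simp [h1] } with hD
  have hsq : ∀ ψ : (H × E) →* Multiplicative (ZMod 2), ψ ^ 2 = 1 := by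
    intro ψ; ext x
    simp [zmod2_sq]
  have hDp : IsPGroup 2 D := by
    intro φ
    refine ⟨1, ?_⟩
    have : ((φ ^ 2 ^ 1 : D) : (H × E) →* Multiplicative (ZMod 2)) = 1 := by
      push_cast
      exact hsq _
    exact Subtype.ext this
  obtain ⟨r, hr⟩ := hDp.exists_card_eq
  -- the bijection
  set S := {N : Subgroup (H × E) // N.Normal ∧ K ≤ N ∧ N.index = 2} with hS
  have hne1 := zmod2_ne
  have hcard2 : Nat.card (Multiplicative (ZMod 2)) = 2 := by
    simp [Nat.card_eq_fintype_card]
  have keridx : ∀ φ : D, (φ : (H × E) →* Multiplicative (ZMod 2)) ≠ 1 →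
      ((φ : (H × E) →* Multiplicative (ZMod 2)).ker.index = 2) := by
    intro φ hφ
    rw [Subgroup.index_ker]
    have hdvd : Nat.card (φ : (H × E) →* Multiplicative (ZMod 2)).range ∣ 2 := by
      have h' := Subgroup.card_subgroup_dvd_card (φ : (H × E) →* Multiplicative (ZMod 2)).range
      rwa [hcard2] at h'
    rcases (Nat.prime_two.eq_one_or_self_of_dvd _ hdvd) with h | h
    · exfalso
      have hbot := Subgroup.card_eq_one.mp h
      apply hφ
      ext x
      have : (φ : (H × E) →* Multiplicative (ZMod 2)) x ∈
          (φ : (H × E) →* Multiplicative (ZMod 2)).range := ⟨x, rfl⟩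
      rw [hbot, Subgroup.mem_bot] at this
      simp [this]
    · exact h
  set F : {φ : D // φ ≠ 1} → S := fun φ =>
    ⟨(φ.1 : (H × E) →* Multiplicative (ZMod 2)).ker,
      my_normal_of_index_two _ (keridx φ.1 (fun h => φ.2 (Subtype.ext h))),
      φ.1.2,
      keridx φ.1 (fun h => φ.2 (Subtype.ext h))⟩ with hF
  have hFbij : Function.Bijective F := by
    constructor
    · intro φ ψ hfe
      have hker : (φ.1 : (H × E) →* Multiplicative (ZMod 2)).ker
          = (ψ.1 : (H × E) →* Multiplicative (ZMod 2)).ker := congrArg Subtype.val hfe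
      have hφ1 : (φ.1 : (H × E) →* Multiplicative (ZMod 2)) ≠ 1 :=
        fun h => φ.2 (Subtype.ext h)
      have hψ1 : (ψ.1 : (H × E) →* Multiplicative (ZMod 2)) ≠ 1 :=
        fun h => ψ.2 (Subtype.ext h)
      refine Subtype.ext (Subtype.ext ?_)
      ext x
      by_cases hx : x ∈ (φ.1 : (H × E) →* Multiplicative (ZMod 2)).ker
      · have hx' := hx
        rw [hker] at hx'
        rw [MonoidHom.mem_ker] at hx hx'
        rw [hx, hx']
      · have hx' := hx
        rw [hker] at hx'
        rw [MonoidHom.mem_ker] at hx hx'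
        exact hne1 _ _ hx hx'
    · rintro ⟨N, hN, hKN, hNi⟩
      haveI := hN
      obtain ⟨φ, hφker⟩ := my_exists_hom_of_index_two N hNi
      have hφD : φ ∈ D := by
        show K ≤ φ.ker
        rw [hφker]; exact hKN
      have hφ1 : (⟨φ, hφD⟩ : D) ≠ 1 := by
        intro h
        have : φ = 1 := congrArg Subtype.val h
        rw [this] at hφker
        have : N.index = 1 := by rw [← hφker]; simp [Subgroup.index_top]
        omega
      exact ⟨⟨⟨φ, hφD⟩, hφ1⟩, Subtype.ext hφker⟩
  have hcardS : Nat.card S = Nat.card D - 1 := by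
    rw [← Nat.card_congr (Equiv.ofBijective F hFbij)]
    haveI : Fintype D := Fintype.ofFinite D
    haveI : DecidableEq D := Classical.decEq _
    rw [Nat.card_eq_fintype_card, Nat.card_eq_fintype_card]
    have h1 : Fintype.card {φ : D // φ = 1} = 1 := Fintype.card_subtype_eq (1 : D)
    have h2 := Fintype.card_subtype_compl (fun φ : D => φ = 1)
    rw [h1] at h2
    convert h2 using 2
  -- D is nontrivial
  have hDnt : Nontrivial D := by
    obtain ⟨N, hN, hKN, hNi⟩ := hex
    obtain ⟨φ, hφ⟩ := hFbij.2 ⟨N, hN, hKN, hNi⟩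
    exact nontrivial_of_ne φ.1 1 φ.2
  have h1lt : 1 < Nat.card D := Finite.one_lt_card_iff_nontrivial.mpr hDnt
  rw [hr] at h1lt
  have hrpos : 1 ≤ r := by
    by_contra h
    interval_cases r
    · simp at h1lt
  rw [hcardS, hr]
  have heven : Even ((2:ℕ) ^ r) := by
    rw [Nat.even_pow]
    exact ⟨even_two, by omega⟩
  exact Nat.Even.sub_odd (Nat.one_le_two_pow) heven odd_one
end
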